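/- For all positive integers k and all integers d, the integer k divides ∑_{m | k} μ(m) · d^{k/m}, where μ is the Möbius function and the sum runs over positive divisors m of k. (This divisibility underlies Witt's dimension formula dim L^k = (1/k) ∑_{m|k} μ(m) d^{k/m} for the homogeneous components of a free Lie algebra on d generators.) -/

import Mathlib

open Finset ArithmeticFunction

lemma keyA (p : ℕ) (hp : p.Prime) (α t : ℕ) (hα : 0 < α) (d : ℤ) :
    (p : ℤ) ^ α ∣ d ^ (p ^ α * t) - d ^ (p ^ (α - 1) * t) := by
  obtain ⟨β, rfl⟩ : ∃ β, α = β + 1 := ⟨α - 1, (Nat.succ_pred_eq_of_pos hα).symm⟩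
  haveI : Fact p.Prime := ⟨hp⟩
  have h1 : (p : ℤ) ∣ (d ^ t) ^ p - d ^ t := by
    have h2 : (((d ^ t) ^ p - d ^ t : ℤ) : ZMod p) = 0 := by
      push_cast
      rw [ZMod.pow_card]
      ring
    exact (ZMod.intCast_zmod_eq_zero_iff_dvd _ p).mp h2
  have h3 := dvd_sub_pow_of_dvd_sub h1 β
  have e1 : ((d ^ t) ^ p) ^ p ^ β = d ^ (p ^ (β + 1) * t) := by
    rw [← pow_mul, ← pow_mul]; ring_nf
  have e2 : (d ^ t) ^ p ^ β = d ^ (p ^ (β + 1 - 1) * t) := by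
    rw [← pow_mul]
    simp [Nat.add_sub_cancel, mul_comm]
  rwa [e1, e2] at h3

/-- For all positive `k` and all integers `d`,
`k` divides `∑_{m | k} μ(m) · d^(k/m)` where `μ` is the Möbius function. -/
theorem stmt6 (k : ℕ) (hk : 0 < k) (d : ℤ) :
    (k : ℤ) ∣ ∑ m ∈ k.divisors, ArithmeticFunction.moebius m * d ^ (k / m) := by
  set S := ∑ m ∈ k.divisors, (moebius m : ℤ) * d ^ (k / m) with hS
  have hfact : (∏ p ∈ k.primeFactors, p ^ k.factorization p) = k :=
    Nat.factorization_prod_pow_eq_self hk.ne'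
  rw [← hfact]
  push_cast
  apply Finset.prod_dvd_of_coprime
  · intro p hp q hq hne
    have hpp : Nat.Prime p := Nat.prime_of_mem_primeFactors hp
    have hqp : Nat.Prime q := Nat.prime_of_mem_primeFactors hq
    have : Nat.Coprime (p ^ k.factorization p) (q ^ k.factorization q) :=
      Nat.Coprime.pow _ _ ((Nat.coprime_primes hpp hqp).mpr hne)
    exact Nat.isCoprime_iff_coprime.mpr this
  · intro p hp
    have hpp : Nat.Prime p := Nat.prime_of_mem_primeFactors hp
    set α := k.factorization p with hαdef
    have hα1 : 0 < α := Nat.Prime.factorization_pos_of_dvd hpp hk.ne'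
      (Nat.dvd_of_mem_primeFactors hp)
    set n := k / p ^ α with hndef
    have hkn : k = p ^ α * n := (Nat.ordProj_mul_ordCompl_eq_self k p).symm
    have hpn : ¬ p ∣ n := Nat.not_dvd_ordCompl hpp hk.ne'
    -- restrict to squarefree divisors
    have hsq : S = ∑ m ∈ k.divisors.filter Squarefree, (moebius m : ℤ) * d ^ (k / m) := by
      rw [Finset.sum_filter_of_ne]
      intro m _ h
      by_contra hns
      simp [moebius_eq_zero_of_not_squarefree hns] at h
    set T := k.divisors.filter Squarefree with hT
    set A := T.filter (fun m => ¬ p ∣ m) with hA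
    set B := T.filter (fun m => p ∣ m) with hB
    have hsplit : S = (∑ m ∈ B, (moebius m : ℤ) * d ^ (k / m))
        + ∑ m ∈ A, (moebius m : ℤ) * d ^ (k / m) := by
      rw [hsq, ← Finset.sum_filter_add_sum_filter_not T (fun m => p ∣ m)]
    -- facts about elements of A
    have hAfacts : ∀ m ∈ A, m ∣ n ∧ Squarefree m ∧ ¬ p ∣ m := by
      intro m hm
      simp only [hA, hT, Finset.mem_filter, Nat.mem_divisors] at hm
      obtain ⟨⟨⟨hmk, _⟩, hsqm⟩, hpm⟩ := hm
      refine ⟨?_, hsqm, hpm⟩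
      have hcop : Nat.Coprime m (p ^ α) :=
        Nat.Coprime.pow_right _ (((Nat.Prime.coprime_iff_not_dvd hpp).mpr hpm).symm)
      exact hcop.dvd_of_dvd_mul_left (hkn ▸ hmk)
    -- bijection B = p * A
    have hBsum : (∑ m ∈ B, (moebius m : ℤ) * d ^ (k / m))
        = ∑ m ∈ A, (moebius (p * m) : ℤ) * d ^ (k / (p * m)) := by
      apply Finset.sum_nbij' (fun m => m / p) (fun m => p * m)
      · intro m hm
        simp only [hB, hT, Finset.mem_filter, Nat.mem_divisors] at hm
        obtain ⟨⟨⟨hmk, _⟩, hsqm⟩, hpm⟩ := hm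
        obtain ⟨m', rfl⟩ := hpm
        have hpm' : ¬ p ∣ m' := by
          intro h
          exact (Nat.squarefree_iff_prime_squarefree.mp hsqm) p hpp
            (by obtain ⟨c, rfl⟩ := h; exact ⟨c, by ring⟩)
        have : p * m' / p = m' := Nat.mul_div_cancel_left _ hpp.pos
        simp only [hA, hT, Finset.mem_filter, Nat.mem_divisors, this]
        exact ⟨⟨⟨dvd_trans (dvd_mul_left m' p) hmk, hk.ne'⟩, hsqm.of_mul_right⟩, hpm'⟩
      · intro m hm
        obtain ⟨hmn, hsqm, hpm⟩ := hAfacts m hm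
        have hcop : Nat.Coprime p m := (Nat.Prime.coprime_iff_not_dvd hpp).mpr hpm
        have hpmk : p * m ∣ k := by
          rw [hkn]
          exact mul_dvd_mul (dvd_pow_self p hα1.ne') hmn
        simp only [hB, hT, Finset.mem_filter, Nat.mem_divisors]
        exact ⟨⟨⟨hpmk, hk.ne'⟩, (Nat.squarefree_mul hcop).mpr ⟨hpp.squarefree, hsqm⟩⟩,
          dvd_mul_right p m⟩
      · intro m hm
        simp only [hB, Finset.mem_filter] at hm
        exact Nat.mul_div_cancel' hm.2
      · intro m hm
        exact Nat.mul_div_cancel_left _ hpp.pos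
      · intro m hm
        simp only [hB, Finset.mem_filter] at hm
        rw [Nat.mul_div_cancel' hm.2]
    rw [hS] at hsplit ⊢
    rw [hsplit, hBsum, ← Finset.sum_add_distrib]
    apply Finset.dvd_sum
    intro m hm
    obtain ⟨hmn, hsqm, hpm⟩ := hAfacts m hm
    have hcop : Nat.Coprime p m := (Nat.Prime.coprime_iff_not_dvd hpp).mpr hpm
    have hmu : (moebius (p * m) : ℤ) = - moebius m := by
      rw [isMultiplicative_moebius.map_mul_of_coprime hcop,
        moebius_apply_prime hpp]
      push_cast; ring
    have hem : k / m = p ^ α * (n / m) := by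
      rw [hkn, Nat.mul_div_assoc _ hmn]
    have hem' : k / (p * m) = p ^ (α - 1) * (n / m) := by
      obtain ⟨β, hβ⟩ : ∃ β, α = β + 1 := ⟨α - 1, (Nat.succ_pred_eq_of_pos hα1).symm⟩
      rw [hkn, hβ, pow_succ, mul_comm (p ^ β) p, mul_assoc,
        Nat.mul_div_mul_left _ _ hpp.pos, Nat.mul_div_assoc _ hmn]
      simp [hβ]
    have hkey := keyA p hpp α (n / m) hα1 d
    rw [← hem, ← hem'] at hkey
    have : (moebius (p * m) : ℤ) * d ^ (k / (p * m)) + (moebius m : ℤ) * d ^ (k / m)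
        = (moebius m : ℤ) * (d ^ (k / m) - d ^ (k / (p * m))) := by
      rw [hmu]; ring
    rw [this]
    exact Dvd.dvd.mul_left hkey _
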